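/- A rational function f admits a realization f(z) = Z(z)C(I - p(z)A)^{-1}B with A nilpotent if and only if in the decomposition f(z) = Z(z)F(p(z)) the vector function F is a (vector of) polynomial(s). Equivalently: if A is nilpotent then f is of the form Σ_{k=0}^{N-1} z^k F_k(p(z)) with all F_k polynomials. -/

import Mathlib

open Polynomial

private lemma inv_one_sub_nilpotent {m : ℕ} (M : Matrix (Fin m) (Fin m) ℂ) {n : ℕ}
    (h : M ^ n = 0) : (1 - M)⁻¹ = ∑ k ∈ Finset.range n, M ^ k := by
  apply Matrix.inv_eq_right_inv
  have h2 := mul_geom_sum M n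
  rw [h] at h2
  have : (1 - M) * ∑ k ∈ Finset.range n, M ^ k
      = -((M - 1) * ∑ k ∈ Finset.range n, M ^ k) := by
    rw [← neg_mul, neg_sub]
  rw [this, h2]
  simp

private lemma sum_mulVec_apply {m n : ℕ} (s : Finset ℕ) (P : ℕ → Matrix (Fin m) (Fin n) ℂ)
    (B : Fin n → ℂ) (i : Fin m) :
    ((∑ k ∈ s, P k).mulVec B) i = ∑ k ∈ s, (P k).mulVec B i := by
  simp only [Matrix.mulVec, dotProduct, Matrix.sum_apply, Finset.sum_mul]
  rw [Finset.sum_comm]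

private def shiftM (d : ℕ) : Matrix (Fin d) (Fin d) ℂ :=
  Matrix.of fun j k => if (j : ℕ) = (k : ℕ) + 1 then 1 else 0

private lemma shiftM_pow (d k : ℕ) (j l : Fin d) :
    ((shiftM d) ^ k) j l = if (j : ℕ) = (l : ℕ) + k then 1 else 0 := by
  induction k generalizing l with
  | zero => simp [Matrix.one_apply, Fin.ext_iff]
  | succ k ih =>
    rw [pow_succ, Matrix.mul_apply]
    by_cases h : (l : ℕ) + 1 < d
    · rw [Finset.sum_eq_single (⟨(l : ℕ) + 1, h⟩ : Fin d)]
      · rw [ih]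
        have hc : ((⟨(l : ℕ) + 1, h⟩ : Fin d) : ℕ) = (l : ℕ) + 1 := rfl
        have e : (l : ℕ) + 1 + k = (l : ℕ) + (k + 1) := by omega
        simp [shiftM, hc, e]
      · intro t _ ht
        have : (t : ℕ) ≠ (l : ℕ) + 1 := by
          intro hc
          exact ht (Fin.ext hc)
        simp [shiftM, this]
      · simp
    · have h1 : ∀ t : Fin d, ((shiftM d) ^ k) j t * (shiftM d) t l = 0 := by
        intro t
        have : (t : ℕ) ≠ (l : ℕ) + 1 := by omega
        simp [shiftM, this]
      rw [Finset.sum_eq_zero fun t _ => h1 t]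
      have : (j : ℕ) ≠ (l : ℕ) + (k + 1) := by omega
      simp [this]

private lemma shiftM_pow_self (d : ℕ) : (shiftM d) ^ d = 0 := by
  ext j l
  rw [shiftM_pow]
  have : (j : ℕ) ≠ (l : ℕ) + d := by omega
  simp [this]

/-- A rational function admits a realization `f(z) = Z(z)C(I - p(z)A)⁻¹B` with `A`
nilpotent if and only if in the decomposition `f(z) = Z(z)F(p(z))` the vector function `F`
is a vector of polynomials.  Forward direction: if `A` is nilpotent the realization equals
`∑_k z^k F_k(p(z))` with polynomials `F_k`; converse: any `∑_k z^k F_k(p(z))` with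
polynomial `F_k` is realized with some nilpotent `A`. -/
theorem nilpotent_realization_iff_polynomial (N : ℕ) (hN : 1 ≤ N)
    (p : ℂ[X]) (hmonic : p.Monic) (hdeg : p.natDegree = N) :
    (∀ (m : ℕ) (A : Matrix (Fin m) (Fin m) ℂ) (B : Fin m → ℂ)
        (Cm : Matrix (Fin N) (Fin m) ℂ), IsNilpotent A →
      ∃ F : Fin N → ℂ[X],
        ∀ z : ℂ,
          ∑ i : Fin N, z ^ (i : ℕ) * Cm.mulVec ((1 - p.eval z • A)⁻¹.mulVec B) i
            = ∑ k : Fin N, z ^ (k : ℕ) * (F k).eval (p.eval z)) ∧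
    (∀ F : Fin N → ℂ[X],
      ∃ (m : ℕ) (A : Matrix (Fin m) (Fin m) ℂ) (B : Fin m → ℂ)
        (Cm : Matrix (Fin N) (Fin m) ℂ), IsNilpotent A ∧
        ∀ z : ℂ,
          ∑ k : Fin N, z ^ (k : ℕ) * (F k).eval (p.eval z)
            = ∑ i : Fin N, z ^ (i : ℕ) * Cm.mulVec ((1 - p.eval z • A)⁻¹.mulVec B) i) := by
  constructor
  · -- forward direction
    intro m A B Cm hA
    obtain ⟨n, hn⟩ := hA
    refine ⟨fun i => ∑ k ∈ Finset.range n,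
        Polynomial.C (Cm.mulVec ((A ^ k).mulVec B) i) * X ^ k, fun z => ?_⟩
    set lam := p.eval z with hlam
    have hnil : (lam • A) ^ n = 0 := by rw [_root_.smul_pow, hn, smul_zero]
    have hinv : (1 - lam • A)⁻¹ = ∑ k ∈ Finset.range n, (lam • A) ^ k :=
      inv_one_sub_nilpotent _ hnil
    have key : ∀ i : Fin N, Cm.mulVec ((1 - lam • A)⁻¹.mulVec B) i
        = ∑ k ∈ Finset.range n, lam ^ k * Cm.mulVec ((A ^ k).mulVec B) i := by
      intro i
      rw [hinv]
      have h1 : ((∑ k ∈ Finset.range n, (lam • A) ^ k).mulVec B)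
          = fun j => ∑ k ∈ Finset.range n, lam ^ k * ((A ^ k).mulVec B) j := by
        funext j
        rw [sum_mulVec_apply]
        refine Finset.sum_congr rfl fun k _ => ?_
        rw [_root_.smul_pow, Matrix.smul_mulVec, Pi.smul_apply, smul_eq_mul]
      rw [h1]
      simp only [Matrix.mulVec, dotProduct]
      calc ∑ x : Fin m, Cm i x * ∑ k ∈ Finset.range n, lam ^ k * ∑ y : Fin m, (A ^ k) x y * B y
          = ∑ x : Fin m, ∑ k ∈ Finset.range n,
              Cm i x * (lam ^ k * ∑ y : Fin m, (A ^ k) x y * B y) :=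
            Finset.sum_congr rfl fun x _ => Finset.mul_sum _ _ _
        _ = ∑ k ∈ Finset.range n, ∑ x : Fin m,
              Cm i x * (lam ^ k * ∑ y : Fin m, (A ^ k) x y * B y) := Finset.sum_comm
        _ = ∑ k ∈ Finset.range n, lam ^ k * ∑ x : Fin m,
              Cm i x * ∑ y : Fin m, (A ^ k) x y * B y := by
            refine Finset.sum_congr rfl fun k _ => ?_
            rw [Finset.mul_sum]
            exact Finset.sum_congr rfl fun x _ => by ring
    refine Finset.sum_congr rfl fun i _ => ?_
    rw [key i]
    congr 1
    rw [eval_finset_sum]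
    refine Finset.sum_congr rfl fun k _ => ?_
    rw [eval_mul, eval_C, eval_pow, eval_X, mul_comm]
  · -- converse direction
    intro F
    set d : ℕ := 1 + Finset.univ.sup (fun i : Fin N => (F i).natDegree) with hd
    have hdlt : ∀ i : Fin N, (F i).natDegree < d := by
      intro i
      have h1 : (F i).natDegree ≤ Finset.univ.sup (fun j : Fin N => (F j).natDegree) :=
        Finset.le_sup (f := fun j : Fin N => (F j).natDegree) (Finset.mem_univ i)
      omega
    refine ⟨d, shiftM d, (fun j => if (j : ℕ) = 0 then (1 : ℂ) else 0),
      Matrix.of (fun i j => (F i).coeff (j : ℕ)), ⟨d, shiftM_pow_self d⟩, fun z => ?_⟩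
    set lam := p.eval z with hlam
    set M : Matrix (Fin d) (Fin d) ℂ := 1 - lam • shiftM d with hM
    set w : Fin d → ℂ := fun j => lam ^ (j : ℕ) with hw
    have hMw : M.mulVec w = (fun j : Fin d => if (j : ℕ) = 0 then (1 : ℂ) else 0) := by
      funext j
      have : M.mulVec w j = ∑ t : Fin d, ((if j = t then (1:ℂ) else 0)
          - lam * (if (j : ℕ) = (t : ℕ) + 1 then 1 else 0)) * lam ^ (t : ℕ) := by
        simp [M, Matrix.mulVec, dotProduct, Matrix.sub_apply, Matrix.one_apply,
          shiftM, Matrix.smul_apply, w, smul_eq_mul]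
      rw [this]
      simp only [sub_mul, Finset.sum_sub_distrib, ite_mul, one_mul, zero_mul]
      rw [Finset.sum_ite_eq Finset.univ j (fun t => lam ^ (t : ℕ))]
      simp only [Finset.mem_univ, if_pos]
      rcases j with ⟨jv, hj⟩
      cases jv with
      | zero =>
        have hz : ∀ t : Fin d, t ∈ Finset.univ → (lam * if ((⟨0, hj⟩ : Fin d) : ℕ) = (t : ℕ) + 1
            then (1 : ℂ) else 0) * lam ^ (t : ℕ) = 0 := by
          intro t _
          have h0 : ((⟨0, hj⟩ : Fin d) : ℕ) ≠ (t : ℕ) + 1 := by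
            have : ((⟨0, hj⟩ : Fin d) : ℕ) = 0 := rfl
            omega
          simp [h0]
        rw [Finset.sum_eq_zero hz]
        simp
      | succ i =>
        have hi : i < d := by omega
        rw [Finset.sum_eq_single (⟨i, hi⟩ : Fin d)]
        · simp [pow_succ]; ring
        · intro t _ ht
          have : ((⟨i + 1, hj⟩ : Fin d) : ℕ) ≠ (t : ℕ) + 1 := by
            intro hc
            have h1 : ((⟨i + 1, hj⟩ : Fin d) : ℕ) = i + 1 := rfl
            have h2 : ((⟨i, hi⟩ : Fin d) : ℕ) = i := rfl
            exact ht (Fin.ext (by omega))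
          have h3 : i ≠ (t : ℕ) := by
            intro hc
            exact ht (Fin.ext (by show (t : ℕ) = i; omega))
          simp [this, h3]
        · simp
    have hMunit : IsUnit M := by
      refine IsNilpotent.isUnit_one_sub ⟨d, ?_⟩
      rw [_root_.smul_pow, shiftM_pow_self, smul_zero]
    have hdet : IsUnit M.det := (Matrix.isUnit_iff_isUnit_det M).mp hMunit
    have hinvv : M⁻¹.mulVec (fun j => if (j : ℕ) = 0 then (1:ℂ) else 0) = w := by
      rw [← hMw, Matrix.mulVec_mulVec, Matrix.nonsing_inv_mul M hdet, Matrix.one_mulVec]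
    rw [hinvv]
    refine Finset.sum_congr rfl fun i _ => ?_
    congr 1
    rw [eval_eq_sum_range' (hdlt i) lam]
    rw [← Fin.sum_univ_eq_sum_range (fun k => (F i).coeff k * lam ^ k) d]
    simp [Matrix.mulVec, dotProduct, w]
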